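/- Let A be an N×N left-stochastic matrix, R a symmetric positive-definite M×M matrix with eigenvalues in (0, λ_max], and μ > 0 with 2μλ_max(R) < 2 (i.e., μλ_max(R) < 1 suffices for |1-2μλ(R)|<1 under 0<μλ(R)<1). If every eigenvalue λ of R satisfies |1 - 2μλ| < 1, then the spectral radius of B = Aᵀ ⊗ (I_M - 2μR) is strictly less than 1. -/

import Mathlib

open Matrix Kronecker

lemma stoch_eig_bound {N : ℕ} (hN : 0 < N) (A : Matrix (Fin N) (Fin N) ℝ)
    (hnn : ∀ i j, 0 ≤ A i j) (hcol : ∀ k, ∑ l, A l k = 1)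
    (ζ : ℂ) (w : Fin N → ℂ) (hw : w ≠ 0)
    (heig : ∀ i, ∑ j, (A j i : ℂ) * w j = ζ * w i) : ‖ζ‖ ≤ 1 := by
  haveI : Nonempty (Fin N) := ⟨⟨0, hN⟩⟩
  obtain ⟨i0, -, hmax⟩ := Finset.exists_max_image Finset.univ
    (fun j => ‖w j‖) ⟨⟨0, hN⟩, Finset.mem_univ _⟩
  have hw0 : ∃ j, w j ≠ 0 := by
    by_contra h
    push_neg at h
    exact hw (funext fun j => h j)
  obtain ⟨j0, hj0⟩ := hw0
  have hpos : 0 < ‖w i0‖ :=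
    lt_of_lt_of_le (by simpa using hj0) (hmax j0 (Finset.mem_univ _))
  have key : ‖ζ‖ * ‖w i0‖ ≤ ‖w i0‖ := by
    calc ‖ζ‖ * ‖w i0‖
        = ‖ζ * w i0‖ := (norm_mul _ _).symm
      _ = ‖∑ j, (A j i0 : ℂ) * w j‖ := by rw [heig i0]
      _ ≤ ∑ j, ‖(A j i0 : ℂ) * w j‖ := norm_sum_le _ _
      _ = ∑ j, A j i0 * ‖w j‖ := by
          refine Finset.sum_congr rfl fun j _ => ?_
          rw [norm_mul, Complex.norm_real, Real.norm_of_nonneg (hnn j i0)]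
      _ ≤ ∑ j, A j i0 * ‖w i0‖ := by
          refine Finset.sum_le_sum fun j _ => ?_
          exact mul_le_mul_of_nonneg_left (hmax j (Finset.mem_univ _)) (hnn j i0)
      _ = ‖w i0‖ := by rw [← Finset.sum_mul, hcol i0, one_mul]
  exact le_of_mul_le_mul_right (by simpa [mul_comm] using key) hpos |>.trans (le_refl 1)

lemma spec_Cc_lt {M : ℕ} (R : Matrix (Fin M) (Fin M) ℝ) (μ : ℝ) (hμ : 0 < μ)
    (hspec : ∀ r ∈ spectrum ℂ (R.map Complex.ofReal),
      ‖(1 : ℂ) - 2 * (μ : ℂ) * r‖ < 1)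
    (z : ℂ) (hz : z ∈ spectrum ℂ
      ((1 : Matrix (Fin M) (Fin M) ℂ) - ((2 * μ : ℝ) : ℂ) • R.map Complex.ofReal)) :
    ‖z‖ < 1 := by
  set Rc := R.map Complex.ofReal with hRcdef
  have h2μ : (2 * (μ : ℂ)) ≠ 0 := by
    simp only [ne_eq, mul_eq_zero, OfNat.ofNat_ne_zero, false_or, Complex.ofReal_eq_zero]
    exact hμ.ne'
  obtain ⟨r, hrdef⟩ : ∃ r : ℂ, r = (1 - z) / (2 * (μ : ℂ)) := ⟨_, rfl⟩
  have hzr : (1 : ℂ) - 2 * (μ : ℂ) * r = z := by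
    rw [hrdef, mul_div_assoc', mul_div_cancel_left₀ _ h2μ]
    ring
  have hrs : r ∈ spectrum ℂ Rc := by
    rw [spectrum.mem_iff] at hz ⊢
    intro hu
    apply hz
    have key : algebraMap ℂ (Matrix (Fin M) (Fin M) ℂ) z
        - ((1 : Matrix (Fin M) (Fin M) ℂ) - ((2 * μ : ℝ) : ℂ) • Rc)
        = (-(2 * (μ : ℂ))) • (algebraMap ℂ (Matrix (Fin M) (Fin M) ℂ) r - Rc) := by
      have hcr : (-(2 * (μ : ℂ))) * r = z - 1 := by
        rw [← hzr]
        ring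
      ext i j
      by_cases h : i = j
      · simp only [Matrix.algebraMap_matrix_apply, Matrix.sub_apply, Matrix.smul_apply,
          Matrix.one_apply, if_pos, h, smul_eq_mul, Algebra.algebraMap_self_apply]
        push_cast
        linear_combination -hcr
      · simp only [Matrix.algebraMap_matrix_apply, Matrix.sub_apply, Matrix.smul_apply,
          Matrix.one_apply, if_neg, h, smul_eq_mul, Algebra.algebraMap_self_apply]
        push_cast
        ring
    rw [key]
    rw [Matrix.isUnit_iff_isUnit_det] at hu ⊢
    rw [Matrix.det_smul, isUnit_iff_ne_zero]
    rw [isUnit_iff_ne_zero] at hu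
    exact mul_ne_zero (pow_ne_zero _ (neg_ne_zero.mpr h2μ)) hu
  have := hspec r hrs
  rwa [hzr] at this

theorem stmt15 {N M : ℕ} (hN : 0 < N) (hM : 0 < M)
    (A : Matrix (Fin N) (Fin N) ℝ) (R : Matrix (Fin M) (Fin M) ℝ) (μ : ℝ)
    (hnn : ∀ i j, 0 ≤ A i j) (hcol : ∀ k, ∑ l, A l k = 1)
    (hR : R.IsHermitian) (hRpd : R.PosDef) (hμ : 0 < μ)
    (hspec : ∀ r ∈ spectrum ℂ (R.map Complex.ofReal),
      ‖(1 : ℂ) - 2 * (μ : ℂ) * r‖ < 1) :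
    sSup ((fun z : ℂ => ‖z‖) '' spectrum ℂ
      ((Aᵀ ⊗ₖ ((1 : Matrix (Fin M) (Fin M) ℝ) - (2 * μ) • R)).map Complex.ofReal)) < 1 := by
  classical
  set Rc := R.map Complex.ofReal with hRcdef
  set Cc : Matrix (Fin M) (Fin M) ℂ := 1 - ((2 * μ : ℝ) : ℂ) • Rc with hCcdef
  set Ac : Matrix (Fin N) (Fin N) ℂ := Aᵀ.map Complex.ofReal with hAcdef
  -- the mapped Kronecker product equals Ac ⊗ₖ Cc
  have hBmap : (Aᵀ ⊗ₖ ((1 : Matrix (Fin M) (Fin M) ℝ) - (2 * μ) • R)).map Complex.ofReal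
      = Ac ⊗ₖ Cc := by
    ext ⟨i, k⟩ ⟨j, l⟩
    by_cases h : k = l <;>
      simp [Matrix.map_apply, kroneckerMap_apply, Matrix.sub_apply, Matrix.smul_apply,
        Matrix.one_apply, h, hAcdef, hCcdef, hRcdef, mul_sub, sub_mul] <;> push_cast <;> ring
  rw [hBmap]
  -- Cc is Hermitian
  have hsymm : ∀ i j, R i j = R j i := fun i j => by
    have := congrFun (congrFun hR j) i
    simpa using this
  have hCc : Cc.IsHermitian := by
    ext i j
    by_cases h : i = j <;>
      simp [Matrix.conjTranspose_apply, hCcdef, Matrix.sub_apply, Matrix.smul_apply,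
        Matrix.one_apply, h, hRcdef, Matrix.map_apply, hsymm i j, eq_comm]
  -- spectral theorem
  set U : Matrix (Fin M) (Fin M) ℂ := (hCc.eigenvectorUnitary : Matrix (Fin M) (Fin M) ℂ)
    with hUdef
  set D : Matrix (Fin M) (Fin M) ℂ :=
    diagonal (RCLike.ofReal ∘ hCc.eigenvalues) with hDdef
  have hUmem := (hCc.eigenvectorUnitary).2
  have hU1 : U * star U = 1 := (Matrix.mem_unitaryGroup_iff).mp hUmem
  have hU2 : star U * U = 1 := (Matrix.mem_unitaryGroup_iff').mp hUmem
  have hST : Cc = U * D * star U := hCc.spectral_theorem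
  -- every eigenvalue of Cc has modulus < 1
  have hClt : ∀ z ∈ spectrum ℂ Cc, ‖z‖ < 1 := fun z hz =>
    spec_Cc_lt R μ hμ hspec z hz
  -- the big unit
  set u : (Matrix (Fin N × Fin M) (Fin N × Fin M) ℂ)ˣ :=
    ⟨(1 : Matrix (Fin N) (Fin N) ℂ) ⊗ₖ U, (1 : Matrix (Fin N) (Fin N) ℂ) ⊗ₖ star U,
      by rw [← Matrix.mul_kronecker_mul, one_mul, hU1, Matrix.one_kronecker_one],
      by rw [← Matrix.mul_kronecker_mul, one_mul, hU2, Matrix.one_kronecker_one]⟩ with hudef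
  have hsim : Ac ⊗ₖ Cc = (u : Matrix (Fin N × Fin M) (Fin N × Fin M) ℂ) * (Ac ⊗ₖ D)
      * ((u⁻¹ : (Matrix (Fin N × Fin M) (Fin N × Fin M) ℂ)ˣ) : Matrix (Fin N × Fin M) (Fin N × Fin M) ℂ) := by
    show Ac ⊗ₖ Cc = ((1 : Matrix (Fin N) (Fin N) ℂ) ⊗ₖ U) * (Ac ⊗ₖ D)
      * ((1 : Matrix (Fin N) (Fin N) ℂ) ⊗ₖ star U)
    rw [← Matrix.mul_kronecker_mul, ← Matrix.mul_kronecker_mul, one_mul, mul_one, ← hST]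
  have hspeq : spectrum ℂ (Ac ⊗ₖ Cc) = spectrum ℂ (Ac ⊗ₖ D) := by
    rw [hsim, spectrum.units_conjugate]
  -- eigenvalues of D are in spectrum of Cc
  have hDval : ∀ k, ((hCc.eigenvalues k : ℝ) : ℂ) ∈ spectrum ℂ Cc := by
    intro k
    have hsd : spectrum ℂ D = Set.range (RCLike.ofReal ∘ hCc.eigenvalues) :=
      spectrum_diagonal _
    have hCD : spectrum ℂ Cc = spectrum ℂ D := by
      let w : (Matrix (Fin M) (Fin M) ℂ)ˣ := ⟨U, star U, hU1, hU2⟩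
      have hw : Cc = (w : Matrix (Fin M) (Fin M) ℂ) * D
          * ((w⁻¹ : (Matrix (Fin M) (Fin M) ℂ)ˣ) : Matrix (Fin M) (Fin M) ℂ) := hST
      rw [hw, spectrum.units_conjugate]
    rw [hCD, hsd]
    exact ⟨k, rfl⟩
  -- main bound: every point in spectrum (Ac ⊗ₖ D) has modulus < 1
  have hbound : ∀ z ∈ spectrum ℂ (Ac ⊗ₖ D), ‖z‖ < 1 := by
    intro z hz
    rw [spectrum.mem_iff, Matrix.isUnit_iff_isUnit_det, isUnit_iff_ne_zero, not_not] at hz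
    obtain ⟨v, hv0, hveq⟩ := (Matrix.exists_mulVec_eq_zero_iff).mpr hz
    have heig : (Ac ⊗ₖ D) *ᵥ v = fun p => z * v p := by
      funext p
      have h := congrFun hveq p
      simp only [Matrix.sub_mulVec, Algebra.algebraMap_eq_smul_one, Matrix.smul_mulVec,
        Matrix.one_mulVec, Pi.sub_apply, Pi.smul_apply, Pi.zero_apply, smul_eq_mul] at h
      linear_combination -h
    have heig' : ∀ j k, (RCLike.ofReal (hCc.eigenvalues k) : ℂ) * (∑ i, Ac j i * v (i, k))
        = z * v (j, k) := by
      intro j k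
      have h1 := congrFun heig (j, k)
      rw [Matrix.mulVec, dotProduct, Fintype.sum_prod_type] at h1
      have h2 : ∀ i : Fin N, ∑ l, (Ac ⊗ₖ D) (j, k) (i, l) * v (i, l)
          = Ac j i * ((RCLike.ofReal (hCc.eigenvalues k) : ℂ) * v (i, k)) := by
        intro i
        rw [Finset.sum_eq_single k]
        · simp [hDdef, Matrix.diagonal_apply]
          ring
        · intro l _ hlk
          simp [hDdef, Matrix.diagonal_apply, Ne.symm hlk]
        · intro hk
          exact absurd (Finset.mem_univ k) hk
      have h3 : ∑ i, Ac j i * ((RCLike.ofReal (hCc.eigenvalues k) : ℂ) * v (i, k))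
          = z * v (j, k) := (Finset.sum_congr rfl fun i _ => (h2 i).symm).trans h1
      rw [← h3, Finset.mul_sum]
      exact Finset.sum_congr rfl fun i _ => by ring
    -- pick a nonzero coordinate
    have hvex : ∃ p, v p ≠ 0 := by
      by_contra h
      push_neg at h
      exact hv0 (funext fun p => h p)
    obtain ⟨⟨j0, k0⟩, hjk0⟩ := hvex
    set c : ℂ := (RCLike.ofReal (hCc.eigenvalues k0) : ℂ) with hcdef
    have hclt : ‖c‖ < 1 := hClt c (hDval k0)
    set w : Fin N → ℂ := fun i => v (i, k0) with hwdef
    have hwne : w ≠ 0 := by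
      intro h
      exact hjk0 (congrFun h j0)
    have heq : ∀ j, c * (∑ i, (A i j : ℂ) * w i) = z * w j := by
      intro j
      have := heig' j k0
      rw [hcdef, hwdef]
      simpa [hAcdef, Matrix.map_apply, Matrix.transpose_apply] using this
    by_cases hc : c = 0
    · have : z * w j0 = 0 := by rw [← heq j0, hc, zero_mul]
      have hz0 : z = 0 := by
        rcases mul_eq_zero.mp this with h | h
        · exact h
        · exact absurd h hjk0
      simp [hz0]
    · have hb : ‖z / c‖ ≤ 1 := by
        refine stoch_eig_bound hN A hnn hcol (z / c) w hwne fun j => ?_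
        have := heq j
        field_simp
        linear_combination this
      have : ‖z‖ = ‖z / c‖ * ‖c‖ := by
        rw [← norm_mul, div_mul_cancel₀ _ hc]
      rw [this]
      calc ‖z / c‖ * ‖c‖ ≤ 1 * ‖c‖ :=
            mul_le_mul_of_nonneg_right hb (norm_nonneg _)
        _ = ‖c‖ := one_mul _
        _ < 1 := hclt
  -- conclude
  rw [hspeq]
  set S : Set ℝ := (fun z : ℂ => ‖z‖) '' spectrum ℂ (Ac ⊗ₖ D) with hSdef
  have hSfin : S.Finite := (Matrix.finite_spectrum (Ac ⊗ₖ D)).image _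
  rcases Set.eq_empty_or_nonempty S with hS | hS
  · rw [hS, Real.sSup_empty]
    norm_num
  · have hmem : sSup S ∈ S := hS.csSup_mem hSfin
    obtain ⟨z, hz, hzeq⟩ := hmem
    rw [← hzeq]
    exact hbound z hz
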